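/- Let A ∈ S_{d,K} and C ∈ R^{d×d} symmetric positive semidefinite such that AᵀC²A is invertible. If ⟨CA(AᵀC²A)^{−1/2} − A, CA⟩ = 0 (Frobenius inner product), then (I_d − AAᵀ)CA = 0. -/

import Mathlib

open Matrix

open scoped ComplexOrder in
/-- The old `Matrix.PosSemidef.sqrt` (Mathlib, Dec 2024), removed since. -/
noncomputable def Matrix.PosSemidef.sqrt {n 𝕜 : Type*} [Fintype n] [RCLike 𝕜] [DecidableEq n]
    {A : Matrix n n 𝕜} (hA : A.PosSemidef) : Matrix n n 𝕜 :=
  hA.1.eigenvectorUnitary.1 * diagonal ((↑) ∘ (√·) ∘ hA.1.eigenvalues) *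
    (star hA.1.eigenvectorUnitary : Matrix n n 𝕜)

open scoped ComplexOrder in
lemma Matrix.PosSemidef.sqrt_mul_self' {n 𝕜 : Type*} [Fintype n] [RCLike 𝕜] [DecidableEq n]
    {A : Matrix n n 𝕜} (hA : A.PosSemidef) : hA.sqrt * hA.sqrt = A := by
  have hU : (star hA.1.eigenvectorUnitary : Matrix n n 𝕜) * hA.1.eigenvectorUnitary.1 = 1 :=
    Unitary.coe_star_mul_self _
  have hD : diagonal ((↑) ∘ (√·) ∘ hA.1.eigenvalues) * diagonal ((↑) ∘ (√·) ∘ hA.1.eigenvalues)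
      = diagonal (RCLike.ofReal ∘ hA.1.eigenvalues : n → 𝕜) := by
    rw [diagonal_mul_diagonal]
    congr 1; funext i
    simp only [Function.comp]
    rw [← RCLike.ofReal_mul, Real.mul_self_sqrt (hA.eigenvalues_nonneg i)]
  conv_rhs => rw [hA.1.spectral_theorem, Unitary.conjStarAlgAut_apply]
  unfold Matrix.PosSemidef.sqrt
  calc _ = hA.1.eigenvectorUnitary.1 * diagonal ((↑) ∘ (√·) ∘ hA.1.eigenvalues) *
      ((star hA.1.eigenvectorUnitary : Matrix n n 𝕜) * hA.1.eigenvectorUnitary.1) *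
      diagonal ((↑) ∘ (√·) ∘ hA.1.eigenvalues) * (star hA.1.eigenvectorUnitary : Matrix n n 𝕜) := by
        simp only [Matrix.mul_assoc]
    _ = _ := by rw [hU, Matrix.mul_one, Matrix.mul_assoc _ (diagonal _) (diagonal _), hD]

open scoped ComplexOrder in
lemma Matrix.PosSemidef.posSemidef_sqrt' {n 𝕜 : Type*} [Fintype n] [RCLike 𝕜] [DecidableEq n]
    {A : Matrix n n 𝕜} (hA : A.PosSemidef) : hA.sqrt.PosSemidef := by
  unfold Matrix.PosSemidef.sqrt
  have hd : (diagonal ((↑) ∘ (√·) ∘ hA.1.eigenvalues) : Matrix n n 𝕜).PosSemidef := by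
    rw [posSemidef_diagonal_iff]
    intro i
    simp only [Function.comp]
    exact RCLike.ofReal_nonneg.mpr (Real.sqrt_nonneg _)
  have := hd.mul_mul_conjTranspose_same (hA.1.eigenvectorUnitary.1)
  simpa [Matrix.star_eq_conjTranspose] using this

private lemma trace_eq_sum {d K : ℕ} (X Y : Matrix (Fin d) (Fin K) ℝ) :
    Matrix.trace (Xᵀ * Y) = ∑ i, ∑ j, X i j * Y i j := by
  simp only [Matrix.trace, Matrix.diag, Matrix.mul_apply, Matrix.transpose_apply]
  rw [Finset.sum_comm]

theorem stmt8 {d K : ℕ} (A : Matrix (Fin d) (Fin K) ℝ) (C : Matrix (Fin d) (Fin d) ℝ)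
    (hA : Aᵀ * A = 1) (hC : C.PosSemidef)
    (hP : (Aᵀ * C * C * A).PosDef)
    (h : ∑ i, ∑ j, ((C * A * (Matrix.PosSemidef.sqrt hP.posSemidef)⁻¹ - A) i j) * ((C * A) i j) = 0) :
    (1 - A * Aᵀ) * C * A = 0 := by
  set S := Matrix.PosSemidef.sqrt hP.posSemidef with hSdef
  have hS2 : S * S = Aᵀ * C * C * A := Matrix.PosSemidef.sqrt_mul_self' hP.posSemidef
  have hSpsd : S.PosSemidef := Matrix.PosSemidef.posSemidef_sqrt' hP.posSemidef
  have hSt : Sᵀ = S := by exact (by simpa using hSpsd.1 : S.IsSymm)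
  have hCt : Cᵀ = C := by exact (by simpa using hC.1 : C.IsSymm)
  have hdetS : IsUnit S.det := by
    have h1 : S.det * S.det = (Aᵀ * C * C * A).det := by rw [← det_mul, hS2]
    have h2 : (0:ℝ) < (Aᵀ * C * C * A).det := hP.det_pos
    have : S.det ≠ 0 := by intro h0; rw [h0, mul_zero] at h1; linarith
    exact isUnit_iff_ne_zero.mpr this
  have hSinv : S⁻¹ * S = 1 := nonsing_inv_mul S hdetS
  have hSinv' : S * S⁻¹ = 1 := mul_nonsing_inv S hdetS
  have hSit : S⁻¹ᵀ = S⁻¹ := by rw [transpose_nonsing_inv, hSt]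
  set R := Matrix.PosSemidef.sqrt hSpsd with hRdef
  have hR2 : R * R = S := Matrix.PosSemidef.sqrt_mul_self' hSpsd
  have hRt : Rᵀ = R := by exact (by simpa using (Matrix.PosSemidef.posSemidef_sqrt' hSpsd).1 : R.IsSymm)
  have hdetR : IsUnit R.det := by
    have h1 : R.det * R.det = S.det := by rw [← det_mul, hR2]
    have : R.det ≠ 0 := by
      intro h0; rw [h0, mul_zero] at h1
      exact hdetS.ne_zero h1.symm
    exact isUnit_iff_ne_zero.mpr this
  -- hypothesis as a trace identity: tr S = tr (Aᵀ C A)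
  have htr : Matrix.trace S = Matrix.trace (Aᵀ * C * A) := by
    have h0 : Matrix.trace ((C * A * S⁻¹ - A)ᵀ * (C * A)) = 0 := by
      rw [trace_eq_sum]; exact h
    have hexp : (C * A * S⁻¹ - A)ᵀ * (C * A) =
        S⁻¹ * (Aᵀ * C * C * A) - Aᵀ * C * A := by
      rw [transpose_sub, transpose_mul, transpose_mul, hSit, hCt]
      simp only [Matrix.sub_mul, Matrix.mul_assoc]
    rw [hexp, trace_sub, ← hS2, ← Matrix.mul_assoc, hSinv, Matrix.one_mul] at h0
    linarith
  -- the key zero-norm matrix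
  set T := A * R - C * A * S⁻¹ * R with hTdef
  have hTtrace : Matrix.trace (Tᵀ * T) = 0 := by
    have hexp : Tᵀ * T =
        R * (Aᵀ * A) * R - R * (Aᵀ * C * A) * (S⁻¹ * R)
          - R * S⁻¹ * (Aᵀ * C * A) * R + R * S⁻¹ * (Aᵀ * C * C * A) * (S⁻¹ * R) := by
      rw [hTdef, transpose_sub, transpose_mul, transpose_mul, transpose_mul,
        transpose_mul, hRt, hSit, hCt]
      simp only [Matrix.sub_mul, Matrix.mul_sub, Matrix.mul_assoc]
      abel
    have t1 : Matrix.trace (R * (Aᵀ * A) * R) = Matrix.trace S := by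
      rw [hA, mul_one, hR2]
    have t2 : Matrix.trace (R * (Aᵀ * C * A) * (S⁻¹ * R)) = Matrix.trace (Aᵀ * C * A) := by
      rw [trace_mul_comm]
      have e : S⁻¹ * R * (R * (Aᵀ * C * A)) = S⁻¹ * (R * R) * (Aᵀ * C * A) := by noncomm_ring
      rw [e, hR2, hSinv, one_mul]
    have t3 : Matrix.trace (R * S⁻¹ * (Aᵀ * C * A) * R) = Matrix.trace (Aᵀ * C * A) := by
      rw [trace_mul_comm]
      have e : R * (R * S⁻¹ * (Aᵀ * C * A)) = R * R * S⁻¹ * (Aᵀ * C * A) := by noncomm_ring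
      rw [e, hR2]
      rw [trace_mul_comm]
      rw [hSinv', mul_one]
    have t4 : Matrix.trace (R * S⁻¹ * (Aᵀ * C * C * A) * (S⁻¹ * R)) = Matrix.trace S := by
      rw [trace_mul_comm]
      have e : S⁻¹ * R * (R * S⁻¹ * (Aᵀ * C * C * A)) =
          S⁻¹ * (R * R) * S⁻¹ * (Aᵀ * C * C * A) := by noncomm_ring
      rw [e, hR2, ← hS2]
      have e2 : S⁻¹ * S * S⁻¹ * (S * S) = (S⁻¹ * S) * ((S⁻¹ * S) * S) := by noncomm_ring
      rw [e2, hSinv, one_mul, one_mul]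
    rw [hexp, trace_add, trace_sub, trace_sub, t1, t2, t3, t4, htr]
    ring
  have hT0 : T = 0 := by
    have hsum : ∑ i, ∑ j, T i j * T i j = 0 := by rw [← trace_eq_sum]; exact hTtrace
    have hnn : ∀ i ∈ Finset.univ, (0:ℝ) ≤ ∑ j, T i j * T i j := by
      intro i _
      exact Finset.sum_nonneg fun j _ => mul_self_nonneg _
    ext i j
    have hi := (Finset.sum_eq_zero_iff_of_nonneg hnn).mp hsum i (Finset.mem_univ i)
    have hj := (Finset.sum_eq_zero_iff_of_nonneg
      (fun j _ => mul_self_nonneg (T i j))).mp hi j (Finset.mem_univ j)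
    have := mul_self_eq_zero.mp hj
    simpa using this
  -- deduce C * A = A * S
  have hCA : C * A = A * S := by
    have h1 : A * R = C * A * S⁻¹ * R := sub_eq_zero.mp hT0
    have h3 := congrArg (fun X => X * (R⁻¹ * S)) h1
    simp only [Matrix.mul_assoc] at h3
    rw [← Matrix.mul_assoc R R⁻¹ S, mul_nonsing_inv R hdetR, Matrix.one_mul] at h3
    rw [hSinv, Matrix.mul_one] at h3
    exact h3.symm
  rw [Matrix.sub_mul, Matrix.sub_mul, Matrix.one_mul,
    Matrix.mul_assoc (A * Aᵀ) C A, hCA, Matrix.mul_assoc A Aᵀ (A * S),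
    ← Matrix.mul_assoc Aᵀ A S, hA, Matrix.one_mul, sub_self]
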